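/- arXiv:2502.00620 — 4 statements merged into one kernel-verified Lean document; each statement's English description precedes it below -/
import Mathlib

section
/- Let R ∈ ℝ^{d×n}, T ∈ ℝⁿ, β > 0, and let w* = (1/n) R ((1/n)RᵀR + βIₙ)⁻¹ T be the ridge regression solution fit to targets T. Then the training error satisfies (1/n)‖Rᵀw* − T‖² ≤ ( β / (λ_min((1/n)RᵀR) + β) )² · (1/n)‖T‖², where λ_min((1/n)RᵀR) is the smallest eigenvalue of the n×n matrix (1/n)RᵀR. -/
open Matrix BigOperators

private lemma orth_dot (n : ℕ) (U : Matrix (Fin n) (Fin n) ℝ) (h : Uᵀ * U = 1)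
    (a : Fin n → ℝ) : (U *ᵥ a) ⬝ᵥ (U *ᵥ a) = a ⬝ᵥ a := by
  rw [Matrix.dotProduct_mulVec, ← Matrix.mulVec_transpose, Matrix.mulVec_mulVec, h,
    Matrix.one_mulVec]

private lemma conj_mul_conj (n : ℕ) (U A B : Matrix (Fin n) (Fin n) ℝ) (hU : Uᵀ * U = 1) :
    (U * A * Uᵀ) * (U * B * Uᵀ) = U * (A * B) * Uᵀ := by
  simp only [Matrix.mul_assoc]
  rw [← Matrix.mul_assoc Uᵀ U, hU, Matrix.one_mul]

/-- Ridge training-error bound: for `w* = (1/n) R ((1/n)RᵀR + βI)⁻¹ T`,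
`(1/n)‖Rᵀw* − T‖² ≤ (β/(λ_min((1/n)RᵀR) + β))² (1/n)‖T‖²`. -/
theorem stmt5 (d n : ℕ) (R : Matrix (Fin d) (Fin n) ℝ) (T : Fin n → ℝ) (β : ℝ) (hβ : 0 < β)
    (hK : (((1 / (n : ℝ)) • (Rᵀ * R)) : Matrix (Fin n) (Fin n) ℝ).IsHermitian) :
    (1 / (n : ℝ)) *
        ∑ i, (Rᵀ.mulVec
            ((1 / (n : ℝ)) •
              (R * ((1 / (n : ℝ)) • (Rᵀ * R) + β • (1 : Matrix (Fin n) (Fin n) ℝ))⁻¹).mulVec T)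
            i - T i) ^ 2
      ≤ (β / ((⨅ i, hK.eigenvalues i) + β)) ^ 2 * ((1 / (n : ℝ)) * ∑ i, (T i) ^ 2) := by
  classical
  have hn : (0:ℝ) ≤ 1 / (n:ℝ) := by positivity
  set K : Matrix (Fin n) (Fin n) ℝ := (1 / (n : ℝ)) • (Rᵀ * R) with hKdef
  set M : Matrix (Fin n) (Fin n) ℝ := (K + β • (1 : Matrix (Fin n) (Fin n) ℝ))⁻¹ with hMdef
  have hRt : (Rᵀ * R).PosSemidef := by
    simpa [Matrix.conjTranspose_eq_transpose_of_trivial] using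
      Matrix.posSemidef_conjTranspose_mul_self R
  have hPSD : K.PosSemidef := ⟨hK, fun x => by
    exact (hRt.smul hn).2 x⟩
  set μ : Fin n → ℝ := hK.eigenvalues with hμdef
  have hμ0 : ∀ i, 0 ≤ μ i := hPSD.eigenvalues_nonneg
  set U : Matrix (Fin n) (Fin n) ℝ := (hK.eigenvectorUnitary : Matrix (Fin n) (Fin n) ℝ)
    with hUdef
  have hU1 : Uᵀ * U = 1 := by
    have := (Matrix.mem_unitaryGroup_iff').mp hK.eigenvectorUnitary.2
    simpa [Matrix.star_eq_conjTranspose, Matrix.conjTranspose_eq_transpose_of_trivial] using this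
  have hU2 : U * Uᵀ = 1 := by
    have := (Matrix.mem_unitaryGroup_iff).mp hK.eigenvectorUnitary.2
    simpa [Matrix.star_eq_conjTranspose, Matrix.conjTranspose_eq_transpose_of_trivial] using this
  have hspec : K = U * Matrix.diagonal μ * Uᵀ := by
    have := hK.spectral_theorem
    simpa [Matrix.star_eq_conjTranspose, Matrix.conjTranspose_eq_transpose_of_trivial,
      Function.comp] using this
  have hpos : ∀ i, 0 < μ i + β := fun i => add_pos_of_nonneg_of_pos (hμ0 i) hβ
  set g : Fin n → ℝ := fun i => (μ i + β)⁻¹ with hgdef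
  have hsum : K + β • (1 : Matrix (Fin n) (Fin n) ℝ)
      = U * Matrix.diagonal (fun i => μ i + β) * Uᵀ := by
    have h1 : (Matrix.diagonal (fun i => μ i + β) : Matrix (Fin n) (Fin n) ℝ)
        = Matrix.diagonal μ + β • 1 := by
      rw [Matrix.smul_one_eq_diagonal, Matrix.diagonal_add]
    rw [h1, Matrix.mul_add, Matrix.add_mul, ← hspec]
    congr 1
    rw [Matrix.mul_smul, Matrix.smul_mul, Matrix.mul_one, hU2]
  have hMinv : M = U * Matrix.diagonal g * Uᵀ := by
    rw [hMdef]
    apply Matrix.inv_eq_right_inv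
    rw [hsum, conj_mul_conj n U _ _ hU1, Matrix.diagonal_mul_diagonal]
    have : (fun i => (μ i + β) * g i) = fun _ => (1:ℝ) := by
      funext i; exact mul_inv_cancel₀ (hpos i).ne'
    rw [this, Matrix.diagonal_one, Matrix.mul_one, hU2]
  set h : Fin n → ℝ := fun i => μ i * g i - 1 with hhdef
  have hKM : K * (U * Matrix.diagonal g * Uᵀ) - 1 = U * Matrix.diagonal h * Uᵀ := by
    have e2 : (1 : Matrix (Fin n) (Fin n) ℝ) = U * (1 : Matrix (Fin n) (Fin n) ℝ) * Uᵀ := by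
      rw [Matrix.mul_one, hU2]
    conv_lhs => rw [hspec, conj_mul_conj n U _ _ hU1, e2]
    rw [← Matrix.sub_mul, ← Matrix.mul_sub, Matrix.diagonal_mul_diagonal,
      ← Matrix.diagonal_one, Matrix.diagonal_sub]
  set y : Fin n → ℝ := Uᵀ *ᵥ T with hydef
  have e0 : Rᵀ *ᵥ ((1 / (n : ℝ)) • ((R * M) *ᵥ T)) = (K * M) *ᵥ T := by
    rw [Matrix.mulVec_smul, Matrix.mulVec_mulVec,
      ← Matrix.smul_mulVec, hKdef, Matrix.smul_mul, Matrix.mul_assoc]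
  have hres : (Rᵀ *ᵥ ((1 / (n : ℝ)) • ((R * M) *ᵥ T))) - T
      = U *ᵥ (Matrix.diagonal h *ᵥ y) := by
    rw [e0, hMinv]
    rw [show (K * (U * Matrix.diagonal g * Uᵀ)) *ᵥ T - T
        = (K * (U * Matrix.diagonal g * Uᵀ) - 1) *ᵥ T by
      rw [Matrix.sub_mulVec, Matrix.one_mulVec]]
    rw [hKM, ← Matrix.mulVec_mulVec, ← Matrix.mulVec_mulVec, hydef]
  have key : ∑ i, ((Rᵀ *ᵥ ((1 / (n : ℝ)) • ((R * M) *ᵥ T))) i - T i) ^ 2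
      = ∑ i, (h i)^2 * (y i)^2 := by
    calc ∑ i, ((Rᵀ *ᵥ ((1 / (n : ℝ)) • ((R * M) *ᵥ T))) i - T i) ^ 2
        = (U *ᵥ (Matrix.diagonal h *ᵥ y)) ⬝ᵥ (U *ᵥ (Matrix.diagonal h *ᵥ y)) := by
          rw [← hres]
          simp [dotProduct, pow_two]
      _ = (Matrix.diagonal h *ᵥ y) ⬝ᵥ (Matrix.diagonal h *ᵥ y) := orth_dot n U hU1 _
      _ = ∑ i, (h i)^2 * (y i)^2 := by
          simp only [dotProduct, Matrix.mulVec_diagonal]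
          exact Finset.sum_congr rfl fun i _ => by ring
  have hTy : ∑ i, (T i)^2 = ∑ i, (y i)^2 := by
    have h1 : T ⬝ᵥ T = y ⬝ᵥ y := by
      have := orth_dot n Uᵀ (by rwa [Matrix.transpose_transpose]) T
      rw [← this, hydef]
    simpa [dotProduct, pow_two] using h1
  rw [key, hTy]
  set lam : ℝ := ⨅ i, μ i with hlamdef
  have hlam0 : 0 ≤ lam := Real.iInf_nonneg hμ0
  have hlamβ : 0 < lam + β := add_pos_of_nonneg_of_pos hlam0 hβ
  have hbound : ∀ i, (h i)^2 ≤ (β / (lam + β))^2 := by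
    intro i
    have hle : lam ≤ μ i := ciInf_le (Set.Finite.bddBelow (Set.finite_range μ)) i
    have hne : (μ i + β) ≠ 0 := (hpos i).ne'
    have hval : h i = -(β / (μ i + β)) := by
      show μ i * (μ i + β)⁻¹ - 1 = -(β / (μ i + β))
      field_simp
      ring
    have hle2 : lam + β ≤ μ i + β := by linarith
    have e : (h i)^2 = (β / (μ i + β))^2 := by rw [hval]; ring
    rw [e, div_pow, div_pow]
    gcongr
  calc (1 / (n : ℝ)) * ∑ i, (h i)^2 * (y i)^2
      ≤ (1 / (n : ℝ)) * ∑ i, (β / (lam + β))^2 * (y i)^2 := by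
        refine mul_le_mul_of_nonneg_left ?_ hn
        exact Finset.sum_le_sum fun i _ =>
          mul_le_mul_of_nonneg_right (hbound i) (sq_nonneg _)
    _ = (β / (lam + β)) ^ 2 * ((1 / (n : ℝ)) * ∑ i, (y i)^2) := by
        rw [← Finset.mul_sum]; ring
end

section
/- Let K_s, K_w ∈ ℝ^{n×n} be symmetric positive semidefinite matrices, let c_s, c_w > 0, and set P_s = K_s(K_s + c_sIₙ)⁻¹ and P_w = K_w(K_w + c_wIₙ)⁻¹. Then for every v ∈ ℝⁿ: ‖P_s(Iₙ − P_w)v‖ ≤ ‖P_s(Iₙ − P_w)P_s‖ · ‖v‖ + ‖(Iₙ − P_s)v‖, where ‖·‖ on matrices is the operator norm induced by the Euclidean norm and ‖·‖ on vectors is the Euclidean norm. -/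
open Matrix BigOperators
open scoped Matrix.Norms.L2Operator

/-- Euclidean norm of a vector in `ℝⁿ`. -/
noncomputable def evnorm {n : ℕ} (v : Fin n → ℝ) : ℝ := Real.sqrt (∑ i, (v i) ^ 2)

lemma evnorm_eq {n : ℕ} (v : Fin n → ℝ) :
    evnorm v = ‖(WithLp.equiv 2 (Fin n → ℝ)).symm v‖ := by
  rw [EuclideanSpace.norm_eq]
  simp [evnorm, sq_abs]

lemma evnorm_nonneg {n : ℕ} (v : Fin n → ℝ) : 0 ≤ evnorm v :=
  Real.sqrt_nonneg _

lemma evnorm_mulVec_le {n : ℕ} (A : Matrix (Fin n) (Fin n) ℝ) (x : Fin n → ℝ) :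
    evnorm (A.mulVec x) ≤ ‖A‖ * evnorm x := by
  rw [evnorm_eq, evnorm_eq]
  exact A.l2_opNorm_mulVec ((WithLp.equiv 2 (Fin n → ℝ)).symm x)

lemma evnorm_add_le {n : ℕ} (x y : Fin n → ℝ) :
    evnorm (x + y) ≤ evnorm x + evnorm y := by
  rw [evnorm_eq, evnorm_eq, evnorm_eq]
  exact norm_add_le ((WithLp.equiv 2 (Fin n → ℝ)).symm x) ((WithLp.equiv 2 (Fin n → ℝ)).symm y)

set_option maxHeartbeats 1000000 in
lemma opNorm_le_one_of_posSemidef {n : ℕ} (A : Matrix (Fin n) (Fin n) ℝ)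
    (h : ((1 : Matrix (Fin n) (Fin n) ℝ) - Aᵀ * A).PosSemidef) : ‖A‖ ≤ 1 := by
  rw [Matrix.l2_opNorm_def]
  refine ContinuousLinearMap.opNorm_le_bound _ zero_le_one fun x => ?_
  rw [one_mul]
  have hx := h.dotProduct_mulVec_nonneg (WithLp.equiv 2 (Fin n → ℝ) x)
  set y : Fin n → ℝ := WithLp.equiv 2 (Fin n → ℝ) x with hy
  have hst : star y = y := by simp
  have hdot : y ⬝ᵥ ((1 - Aᵀ * A) *ᵥ y) = y ⬝ᵥ y - (A *ᵥ y) ⬝ᵥ (A *ᵥ y) := by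
    rw [Matrix.sub_mulVec, dotProduct_sub, Matrix.one_mulVec]
    congr 1
    rw [← Matrix.mulVec_mulVec, Matrix.dotProduct_mulVec, Matrix.vecMul_transpose]
  rw [hst, hdot] at hx
  have e1 : ∀ z : EuclideanSpace ℝ (Fin n),
      ‖z‖ ^ 2 = (WithLp.equiv 2 (Fin n → ℝ) z) ⬝ᵥ (WithLp.equiv 2 (Fin n → ℝ) z) := by
    intro z
    rw [EuclideanSpace.norm_eq, Real.sq_sqrt (by positivity)]
    simp [dotProduct, sq_abs, pow_two]
  have happ : ((Matrix.toEuclideanLin ≪≫ₗ LinearMap.toContinuousLinearMap) A) x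
      = (WithLp.equiv 2 (Fin n → ℝ)).symm (A *ᵥ y) := by
    simp [Matrix.toEuclideanLin_apply, hy]
  show ‖((Matrix.toEuclideanLin ≪≫ₗ LinearMap.toContinuousLinearMap) A) x‖ ≤ ‖x‖
  have h2 : ‖((Matrix.toEuclideanLin ≪≫ₗ LinearMap.toContinuousLinearMap) A) x‖ ^ 2
      ≤ ‖x‖ ^ 2 := by
    rw [e1, e1, happ]
    simpa [hy] using sub_nonneg.mp hx
  have h3 := Real.sqrt_le_sqrt h2
  rwa [Real.sqrt_sq (norm_nonneg _), Real.sqrt_sq (norm_nonneg _)] at h3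

lemma smul_posSemidef {n : ℕ} {K : Matrix (Fin n) (Fin n) ℝ} {c : ℝ}
    (hK : K.PosSemidef) (hc : 0 ≤ c) : (c • K).PosSemidef := by
  rw [Matrix.posSemidef_iff_dotProduct_mulVec]
  constructor
  · show (c • K)ᴴ = c • K
    rw [Matrix.conjTranspose_smul, hK.1]
    simp
  · intro x
    have h0 := hK.dotProduct_mulVec_nonneg x
    simp only [Matrix.smul_mulVec, dotProduct_smul, smul_eq_mul]
    positivity

lemma key_facts {n : ℕ} (K : Matrix (Fin n) (Fin n) ℝ) (c : ℝ)
    (hK : K.PosSemidef) (hc : 0 < c) :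
    ‖K * (K + c • (1 : Matrix (Fin n) (Fin n) ℝ))⁻¹‖ ≤ 1 ∧
    ‖(1 : Matrix (Fin n) (Fin n) ℝ) - K * (K + c • (1 : Matrix (Fin n) (Fin n) ℝ))⁻¹‖ ≤ 1 := by
  set B : Matrix (Fin n) (Fin n) ℝ := K + c • 1 with hBdef
  have hcI : (c • (1 : Matrix (Fin n) (Fin n) ℝ)).PosDef := by
    have h1 : (c • (1 : Matrix (Fin n) (Fin n) ℝ)) = Matrix.diagonal (fun _ => c) := by
      ext i j
      by_cases hij : i = j <;> simp [Matrix.one_apply, hij]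
    rw [h1]
    exact Matrix.PosDef.diagonal (fun _ => hc)
  have hB : B.PosDef := Matrix.PosDef.posSemidef_add hK hcI
  set S : Matrix (Fin n) (Fin n) ℝ := B⁻¹ with hSdef
  have hdet : IsUnit B.det := (Matrix.isUnit_iff_isUnit_det B).mp hB.isUnit
  have hBS : B * S = 1 := Matrix.mul_nonsing_inv B hdet
  have hSB : S * B = 1 := Matrix.nonsing_inv_mul B hdet
  have hSt : Sᵀ = S := by
    rw [← Matrix.conjTranspose_eq_transpose_of_trivial]
    exact hB.posSemidef.inv.1
  have hKt : Kᵀ = K := by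
    rw [← Matrix.conjTranspose_eq_transpose_of_trivial]
    exact hK.1
  have hKeq : K = B - c • 1 := by rw [hBdef]; abel
  have hP : K * S = 1 - c • S := by
    have h1 : K * S + c • S = 1 := by
      rw [← hBS, hBdef, add_mul, Matrix.smul_mul, one_mul]
    linear_combination (norm := module) h1
  -- identity (a)
  have idA : (1 : Matrix (Fin n) (Fin n) ℝ) - (K * S)ᵀ * (K * S)
      = Sᵀ * ((2 * c) • K + (c ^ 2) • (1 : Matrix (Fin n) (Fin n) ℝ)) * S := by
    rw [hP, hSt, hKeq]
    simp only [Matrix.transpose_sub, Matrix.transpose_smul, Matrix.transpose_one, hSt,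
      Matrix.mul_sub, Matrix.sub_mul, Matrix.mul_add, Matrix.add_mul,
      Matrix.smul_mul, Matrix.mul_smul, smul_smul, Matrix.mul_one, Matrix.one_mul,
      smul_sub, sub_smul, Matrix.mul_assoc, hBS, hSB]
    module
  have idB : (1 : Matrix (Fin n) (Fin n) ℝ) - ((1 : Matrix (Fin n) (Fin n) ℝ) - K * S)ᵀ *
        ((1 : Matrix (Fin n) (Fin n) ℝ) - K * S)
      = Sᵀ * (Kᵀ * K + (2 * c) • K) * S := by
    rw [hP, hSt, hKt, hKeq]
    simp only [Matrix.transpose_sub, Matrix.transpose_smul, Matrix.transpose_one, hSt,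
      Matrix.mul_sub, Matrix.sub_mul, Matrix.mul_add, Matrix.add_mul,
      Matrix.smul_mul, Matrix.mul_smul, smul_smul, Matrix.mul_one, Matrix.one_mul,
      smul_sub, sub_smul, Matrix.mul_assoc, hBS, hSB]
    module
  have hKK : (Kᵀ * K).PosSemidef := by
    have := Matrix.posSemidef_conjTranspose_mul_self K
    rwa [Matrix.conjTranspose_eq_transpose_of_trivial] at this
  have hconj : ∀ M : Matrix (Fin n) (Fin n) ℝ, M.PosSemidef → (Sᵀ * M * S).PosSemidef := by
    intro M hM
    have := hM.conjTranspose_mul_mul_same S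
    rwa [Matrix.conjTranspose_eq_transpose_of_trivial] at this
  constructor
  · refine opNorm_le_one_of_posSemidef _ ?_
    rw [idA]
    exact hconj _ ((smul_posSemidef hK (by linarith)).add
      (smul_posSemidef Matrix.PosSemidef.one (by positivity)))
  · refine opNorm_le_one_of_posSemidef _ ?_
    rw [idB]
    exact hconj _ (hKK.add (smul_posSemidef hK (by linarith)))

/-- With `P_s = K_s(K_s+c_sI)⁻¹` and `P_w = K_w(K_w+c_wI)⁻¹` built from symmetric PSD kernels,
`‖P_s(I−P_w)v‖ ≤ ‖P_s(I−P_w)P_s‖ ‖v‖ + ‖(I−P_s)v‖`. -/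
theorem stmt9 (n : ℕ) (Ks Kw : Matrix (Fin n) (Fin n) ℝ)
    (hKs : Ks.PosSemidef) (hKw : Kw.PosSemidef)
    (cs cw : ℝ) (hcs : 0 < cs) (hcw : 0 < cw) (v : Fin n → ℝ) :
    evnorm ((Ks * (Ks + cs • (1 : Matrix (Fin n) (Fin n) ℝ))⁻¹).mulVec
        (((1 : Matrix (Fin n) (Fin n) ℝ)
          - Kw * (Kw + cw • (1 : Matrix (Fin n) (Fin n) ℝ))⁻¹).mulVec v))
      ≤ ‖(Ks * (Ks + cs • (1 : Matrix (Fin n) (Fin n) ℝ))⁻¹) *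
            ((1 : Matrix (Fin n) (Fin n) ℝ)
              - Kw * (Kw + cw • (1 : Matrix (Fin n) (Fin n) ℝ))⁻¹) *
            (Ks * (Ks + cs • (1 : Matrix (Fin n) (Fin n) ℝ))⁻¹)‖ * evnorm v
        + evnorm ((((1 : Matrix (Fin n) (Fin n) ℝ)
              - Ks * (Ks + cs • (1 : Matrix (Fin n) (Fin n) ℝ))⁻¹)).mulVec v) := by
  set Ps : Matrix (Fin n) (Fin n) ℝ := Ks * (Ks + cs • 1)⁻¹ with hPs
  set Pw : Matrix (Fin n) (Fin n) ℝ := Kw * (Kw + cw • 1)⁻¹ with hPw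
  obtain ⟨hPs1, hPs2⟩ := key_facts Ks cs hKs hcs
  obtain ⟨hPw1, hPw2⟩ := key_facts Kw cw hKw hcw
  have hsplit : Ps.mulVec (((1 : Matrix (Fin n) (Fin n) ℝ) - Pw).mulVec v)
      = (Ps * ((1 : Matrix (Fin n) (Fin n) ℝ) - Pw) * Ps).mulVec v
        + (Ps * ((1 : Matrix (Fin n) (Fin n) ℝ) - Pw)).mulVec
            (((1 : Matrix (Fin n) (Fin n) ℝ) - Ps).mulVec v) := by
    rw [Matrix.mulVec_mulVec, Matrix.mulVec_mulVec, ← Matrix.add_mulVec]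
    have : Ps * (1 - Pw) = Ps * (1 - Pw) * Ps + Ps * (1 - Pw) * (1 - Ps) := by noncomm_ring
    rw [← this]
  rw [hsplit]
  refine le_trans (evnorm_add_le _ _) (add_le_add (evnorm_mulVec_le _ _) ?_)
  calc evnorm ((Ps * (1 - Pw)).mulVec ((1 - Ps).mulVec v))
      ≤ ‖Ps * (1 - Pw)‖ * evnorm ((1 - Ps).mulVec v) := evnorm_mulVec_le _ _
    _ ≤ 1 * evnorm ((1 - Ps).mulVec v) := by
        refine mul_le_mul_of_nonneg_right ?_ (evnorm_nonneg _)
        calc ‖Ps * (1 - Pw)‖ ≤ ‖Ps‖ * ‖1 - Pw‖ := Matrix.l2_opNorm_mul _ _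
          _ ≤ 1 * 1 := mul_le_mul hPs1 hPw2 (norm_nonneg _) zero_le_one
          _ = 1 := one_mul 1
    _ = evnorm ((1 - Ps).mulVec v) := one_mul _
end

section
/- Let (Ω, 𝒫) be a probability space and let r : Ω → ℝ^d be a random vector with ‖r‖² ≤ B almost surely, for a constant B > 0. Let Σ ∈ ℝ^{d×d} be the matrix with entries Σ_{ij} = E[r_i r_j]. Then the entrywise expectation E[(rrᵀ − Σ)²] exists and the matrix B·Σ − E[(rrᵀ − Σ)²] is positive semidefinite. -/
open Matrix MeasureTheory BigOperators

private lemma integ_bd {Ω : Type*} [MeasurableSpace Ω] {μ : Measure Ω} [IsProbabilityMeasure μ]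
    {f : Ω → ℝ} (hf : Measurable f) {C : ℝ} (h : ∀ᵐ ω ∂μ, |f ω| ≤ C) : Integrable f μ :=
  Integrable.mono' (integrable_const C) hf.aestronglyMeasurable
    (by simpa [Real.norm_eq_abs] using h)

private lemma psd_add {d : ℕ} {A C : Matrix (Fin d) (Fin d) ℝ}
    (hA : A.PosSemidef) (hC : C.PosSemidef) : (A + C).PosSemidef := by
  rw [Matrix.posSemidef_iff_dotProduct_mulVec] at hA hC ⊢
  refine ⟨hA.1.add hC.1, fun x => ?_⟩
  rw [Matrix.add_mulVec, dotProduct_add]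
  exact add_nonneg (hA.2 x) (hC.2 x)

/-- For a random vector `r` with `‖r‖² ≤ B` almost surely and covariance `Σ = E[rrᵀ]`,
the entrywise expectation `E[(rrᵀ − Σ)²]` exists and `B·Σ − E[(rrᵀ − Σ)²]` is PSD. -/
theorem stmt11 {Ω : Type*} [MeasurableSpace Ω] (μ : Measure Ω) [IsProbabilityMeasure μ]
    {d : ℕ} (r : Ω → Fin d → ℝ) (hmeas : ∀ i, Measurable fun ω => r ω i)
    (B : ℝ) (hB : 0 < B) (hbound : ∀ᵐ ω ∂μ, ∑ i, (r ω i) ^ 2 ≤ B)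
    (Sig : Matrix (Fin d) (Fin d) ℝ) (hSig : ∀ i j, Sig i j = ∫ ω, r ω i * r ω j ∂μ) :
    (∀ i j, Integrable (fun ω =>
        ((vecMulVec (r ω) (r ω) - Sig) * (vecMulVec (r ω) (r ω) - Sig)) i j) μ) ∧
    (B • Sig - Matrix.of fun i j => ∫ ω,
        ((vecMulVec (r ω) (r ω) - Sig) * (vecMulVec (r ω) (r ω) - Sig)) i j ∂μ).PosSemidef := by
  set s : Ω → ℝ := fun ω => ∑ i, (r ω i) ^ 2 with hs_def
  have hsmeas : Measurable s := Finset.measurable_sum _ (fun i _ => (hmeas i).pow_const 2)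
  have hs_nonneg : ∀ ω, 0 ≤ s ω := fun ω => Finset.sum_nonneg fun i _ => sq_nonneg _
  have hsq_le : ∀ ω (i : Fin d), (r ω i) ^ 2 ≤ s ω := fun ω i =>
    Finset.single_le_sum (fun k _ => sq_nonneg (r ω k)) (Finset.mem_univ i)
  have hrr_meas : ∀ i j, Measurable fun ω => r ω i * r ω j := fun i j => (hmeas i).mul (hmeas j)
  have hrr_bd : ∀ i j, ∀ᵐ ω ∂μ, |r ω i * r ω j| ≤ B := by
    intro i j
    filter_upwards [hbound] with ω hω
    have h1 := (hsq_le ω i).trans hω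
    have h2 := (hsq_le ω j).trans hω
    have h3 : |r ω i * r ω j| ^ 2 ≤ B ^ 2 := by
      rw [sq_abs]; nlinarith [sq_nonneg (r ω i), sq_nonneg (r ω j)]
    nlinarith [abs_nonneg (r ω i * r ω j), hB.le]
  have hrr_int : ∀ i j, Integrable (fun ω => r ω i * r ω j) μ :=
    fun i j => integ_bd (hrr_meas i j) (hrr_bd i j)
  have hSig_symm : ∀ i j, Sig j i = Sig i j := by
    intro i j; rw [hSig, hSig]
    exact integral_congr_ae (Filter.Eventually.of_forall fun ω => mul_comm _ _)
  -- integrability of fourth moments with s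
  have hrrs_meas : ∀ i j, Measurable fun ω => r ω i * r ω j * s ω :=
    fun i j => (hrr_meas i j).mul hsmeas
  have hrrs_bd : ∀ i j, ∀ᵐ ω ∂μ, |r ω i * r ω j * s ω| ≤ B * B := by
    intro i j
    filter_upwards [hbound, hrr_bd i j] with ω h1 h2
    rw [abs_mul, abs_of_nonneg (hs_nonneg ω)]
    exact mul_le_mul h2 h1 (hs_nonneg ω) hB.le
  have hrrs_int : ∀ i j, Integrable (fun ω => r ω i * r ω j * s ω) μ :=
    fun i j => integ_bd (hrrs_meas i j) (hrrs_bd i j)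
  -- entries of M*M
  have hMM : ∀ i j ω, ((vecMulVec (r ω) (r ω) - Sig) * (vecMulVec (r ω) (r ω) - Sig)) i j
      = ∑ k, (r ω i * r ω k - Sig i k) * (r ω k * r ω j - Sig k j) := by
    intro i j ω
    simp [Matrix.mul_apply, Matrix.sub_apply, vecMulVec_apply]
  -- term integrability
  have hterm_int : ∀ i j k, Integrable
      (fun ω => (r ω i * r ω k - Sig i k) * (r ω k * r ω j - Sig k j)) μ := by
    intro i j k
    have : (fun ω => (r ω i * r ω k - Sig i k) * (r ω k * r ω j - Sig k j))
        = fun ω => r ω i * r ω k * (r ω k * r ω j) - Sig k j * (r ω i * r ω k)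
            - Sig i k * (r ω k * r ω j) + Sig i k * Sig k j := by
      funext ω; ring
    rw [this]
    have h4 : Integrable (fun ω => r ω i * r ω k * (r ω k * r ω j)) μ := by
      apply integ_bd ((hrr_meas i k).mul (hrr_meas k j))
      filter_upwards [hrr_bd i k, hrr_bd k j] with ω h1 h2
      rw [Pi.mul_apply, abs_mul]
      exact mul_le_mul h1 h2 (abs_nonneg _) hB.le
    exact (((h4.sub ((hrr_int i k).const_mul _)).sub
      ((hrr_int k j).const_mul _)).add (integrable_const _))
  -- first conjunct
  have hMM_int : ∀ i j, Integrable (fun ω =>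
      ((vecMulVec (r ω) (r ω) - Sig) * (vecMulVec (r ω) (r ω) - Sig)) i j) μ := by
    intro i j
    have := integrable_finset_sum (μ := μ) Finset.univ (fun k _ => hterm_int i j k)
    simpa [hMM i j] using this
  refine ⟨hMM_int, ?_⟩
  -- key identity for the entrywise expectations
  have hterm_eq : ∀ i j k, (∫ ω, (r ω i * r ω k - Sig i k) * (r ω k * r ω j - Sig k j) ∂μ)
      = (∫ ω, r ω i * r ω k * (r ω k * r ω j) ∂μ) - Sig i k * Sig k j := by
    intro i j k
    have h4 : Integrable (fun ω => r ω i * r ω k * (r ω k * r ω j)) μ := by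
      apply integ_bd ((hrr_meas i k).mul (hrr_meas k j))
      filter_upwards [hrr_bd i k, hrr_bd k j] with ω h1 h2
      rw [Pi.mul_apply, abs_mul]; exact mul_le_mul h1 h2 (abs_nonneg _) hB.le
    have he : (fun ω => (r ω i * r ω k - Sig i k) * (r ω k * r ω j - Sig k j))
        = fun ω => (r ω i * r ω k * (r ω k * r ω j) - Sig k j * (r ω i * r ω k)
            - Sig i k * (r ω k * r ω j)) + Sig i k * Sig k j := by
      funext ω; ring
    have hi1 : Integrable (fun ω => r ω i * r ω k * (r ω k * r ω j)
        - Sig k j * (r ω i * r ω k)) μ := h4.sub ((hrr_int i k).const_mul _)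
    have hi2 : Integrable (fun ω => r ω i * r ω k * (r ω k * r ω j)
        - Sig k j * (r ω i * r ω k) - Sig i k * (r ω k * r ω j)) μ :=
      hi1.sub ((hrr_int k j).const_mul _)
    rw [he, integral_add hi2 (integrable_const _),
      integral_sub hi1 ((hrr_int k j).const_mul _),
      integral_sub h4 ((hrr_int i k).const_mul _),
      integral_const_mul, integral_const_mul, integral_const,
      ← hSig i k, ← hSig k j]
    simp; ring
  have hkey : ∀ i j, (∫ ω, ((vecMulVec (r ω) (r ω) - Sig) * (vecMulVec (r ω) (r ω) - Sig)) i j ∂μ)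
      = (∫ ω, r ω i * r ω j * s ω ∂μ) - (Sig * Sig) i j := by
    intro i j
    have h1 : (∫ ω, ((vecMulVec (r ω) (r ω) - Sig) * (vecMulVec (r ω) (r ω) - Sig)) i j ∂μ)
        = ∑ k, ∫ ω, (r ω i * r ω k - Sig i k) * (r ω k * r ω j - Sig k j) ∂μ := by
      rw [← integral_finset_sum Finset.univ (fun k _ => hterm_int i j k)]
      exact integral_congr_ae (Filter.Eventually.of_forall fun ω => hMM i j ω)
    rw [h1]
    have h2 : ∀ k ∈ Finset.univ, (∫ ω, (r ω i * r ω k - Sig i k) * (r ω k * r ω j - Sig k j) ∂μ)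
        = (∫ ω, r ω i * r ω k * (r ω k * r ω j) ∂μ) - Sig i k * Sig k j :=
      fun k _ => hterm_eq i j k
    rw [Finset.sum_congr rfl h2, Finset.sum_sub_distrib, Matrix.mul_apply]
    congr 1
    rw [← integral_finset_sum Finset.univ (fun k _ => by
      apply integ_bd ((hrr_meas i k).mul (hrr_meas k j))
      filter_upwards [hrr_bd i k, hrr_bd k j] with ω hh1 hh2
      rw [Pi.mul_apply, abs_mul]; exact mul_le_mul hh1 hh2 (abs_nonneg _) hB.le)]
    apply integral_congr_ae (Filter.Eventually.of_forall fun ω => ?_)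
    simp only [hs_def, Finset.mul_sum]
    exact Finset.sum_congr rfl fun k _ => by ring
  -- assemble the matrices
  set A : Matrix (Fin d) (Fin d) ℝ := Matrix.of (fun i j => ∫ ω, r ω i * r ω j * s ω ∂μ)
    with hA_def
  have hmat : (B • Sig - Matrix.of fun i j => ∫ ω,
      ((vecMulVec (r ω) (r ω) - Sig) * (vecMulVec (r ω) (r ω) - Sig)) i j ∂μ)
      = (B • Sig - A) + Sig * Sig := by
    ext i j
    simp only [Matrix.add_apply, Matrix.sub_apply, Matrix.smul_apply, Matrix.of_apply,
      smul_eq_mul, hkey i j, hA_def]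
    ring
  rw [hmat]
  apply psd_add
  · rw [Matrix.posSemidef_iff_dotProduct_mulVec]
    constructor
    · rw [Matrix.IsHermitian]
      ext i j
      simp only [Matrix.conjTranspose_apply, Matrix.sub_apply, Matrix.smul_apply,
        Matrix.of_apply, smul_eq_mul, star_trivial, hA_def]
      rw [hSig_symm]
      congr 1
      exact integral_congr_ae (Filter.Eventually.of_forall fun ω => by ring)
    · intro x
      have hint : ∀ (i j : Fin d),
          Integrable (fun ω => x i * x j * ((B - s ω) * (r ω i * r ω j))) μ := by
        intro i j
        have he : (fun ω => x i * x j * ((B - s ω) * (r ω i * r ω j)))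
            = fun ω => (x i * x j) * (B * (r ω i * r ω j) - r ω i * r ω j * s ω) := by
          funext ω; ring
        rw [he]
        exact (((hrr_int i j).const_mul B).sub (hrrs_int i j)).const_mul _
      have h1 : ∀ ω, (B - s ω) * (∑ i, x i * r ω i) ^ 2
          = ∑ i, ∑ j, x i * x j * ((B - s ω) * (r ω i * r ω j)) := by
        intro ω
        rw [sq, Finset.sum_mul_sum, Finset.mul_sum]
        refine Finset.sum_congr rfl fun i _ => ?_
        rw [Finset.mul_sum]
        exact Finset.sum_congr rfl fun j _ => by ring
      have h2 : (∫ ω, (B - s ω) * (∑ i, x i * r ω i) ^ 2 ∂μ)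
          = ∑ i, ∑ j, (x i * x j * (B * Sig i j - A i j)) := by
        calc (∫ ω, (B - s ω) * (∑ i, x i * r ω i) ^ 2 ∂μ)
            = ∫ ω, ∑ i, ∑ j, x i * x j * ((B - s ω) * (r ω i * r ω j)) ∂μ :=
              integral_congr_ae (Filter.Eventually.of_forall fun ω => h1 ω)
          _ = ∑ i, ∫ ω, ∑ j, x i * x j * ((B - s ω) * (r ω i * r ω j)) ∂μ :=
              integral_finset_sum _ (fun i _ => integrable_finset_sum _ fun j _ => hint i j)
          _ = ∑ i, ∑ j, ∫ ω, x i * x j * ((B - s ω) * (r ω i * r ω j)) ∂μ :=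
              Finset.sum_congr rfl fun i _ => integral_finset_sum _ fun j _ => hint i j
          _ = ∑ i, ∑ j, (x i * x j * (B * Sig i j - A i j)) := by
              refine Finset.sum_congr rfl fun i _ => Finset.sum_congr rfl fun j _ => ?_
              have he : (fun ω => x i * x j * ((B - s ω) * (r ω i * r ω j)))
                  = fun ω => (x i * x j) * (B * (r ω i * r ω j) - r ω i * r ω j * s ω) := by
                funext ω; ring
              rw [he, integral_const_mul,
                integral_sub ((hrr_int i j).const_mul B) (hrrs_int i j),
                integral_const_mul, ← hSig i j]
              simp [hA_def]
      have h3 : 0 ≤ ∫ ω, (B - s ω) * (∑ i, x i * r ω i) ^ 2 ∂μ := by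
        apply integral_nonneg_of_ae
        filter_upwards [hbound] with ω hω
        exact mul_nonneg (by simp only [hs_def]; linarith) (sq_nonneg _)
      have h4 : dotProduct (star x) ((B • Sig - A) *ᵥ x)
          = ∑ i, ∑ j, x i * x j * (B * Sig i j - A i j) := by
        simp only [dotProduct, Matrix.mulVec, dotProduct, star_trivial,
          Matrix.sub_apply, Matrix.smul_apply, smul_eq_mul, Finset.mul_sum, Pi.star_apply]
        exact Finset.sum_congr rfl fun i _ => Finset.sum_congr rfl fun j _ => by ring
      rw [h4, ← h2]
      exact h3
  · have hST : Sig * Sig = Sigᴴ * Sig := by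
      congr 1
      ext i j
      simp [Matrix.conjTranspose_apply, hSig_symm i j]
    rw [hST]
    exact Matrix.posSemidef_conjTranspose_mul_self Sig
end

section
/- Let R ∈ ℝ^{d×n}, let Π ∈ ℝ^{d×d} be an orthogonal projection matrix (symmetric with Π² = Π), and let β > 0 and γ ≥ 0. Then the matrices (1/n)RᵀR + βIₙ and (1/n)RᵀΠR + (γ+β)Iₙ are both invertible, and ‖((1/n)RᵀR + βIₙ)⁻¹ − ((1/n)RᵀΠR + (γ+β)Iₙ)⁻¹‖ ≤ ‖(1/n)Rᵀ(I_d − Π)R − γIₙ‖ / (β(γ+β)), where ‖·‖ is the operator norm induced by the Euclidean norm. -/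
open Matrix
open scoped Matrix.Norms.L2Operator RealInnerProductSpace

private lemma psd_smul {n : ℕ} {M : Matrix (Fin n) (Fin n) ℝ} (hM : M.PosSemidef)
    {c : ℝ} (hc : 0 ≤ c) : (c • M).PosSemidef := by
  refine ⟨?_, fun x => ?_⟩
  · unfold Matrix.IsHermitian
    rw [conjTranspose_smul, hM.1]
    simp
  · exact (hM.smul hc).2 x

private lemma key_unit {n : ℕ} {M : Matrix (Fin n) (Fin n) ℝ} (hM : M.PosSemidef)
    {c : ℝ} (hc : 0 < c) : (M + c • (1 : Matrix (Fin n) (Fin n) ℝ)).PosDef := by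
  refine Matrix.PosDef.posSemidef_add hM ?_
  rw [smul_one_eq_diagonal]
  exact posDef_diagonal_iff.mpr fun _ => hc

private lemma key_norm {n : ℕ} {M : Matrix (Fin n) (Fin n) ℝ} (hM : M.PosSemidef)
    {c : ℝ} (hc : 0 < c) :
    ‖(M + c • (1 : Matrix (Fin n) (Fin n) ℝ))⁻¹‖ ≤ 1 / c := by
  set A := M + c • (1 : Matrix (Fin n) (Fin n) ℝ) with hA
  have hAd : (A).PosDef := key_unit hM hc
  have hinv : A * A⁻¹ = 1 := mul_nonsing_inv A (isUnit_iff_isUnit_det A |>.mp hAd.isUnit)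
  -- key pointwise bound
  have key : ∀ x : EuclideanSpace ℝ (Fin n), c * ‖x‖ ≤ ‖toEuclideanCLM (𝕜 := ℝ) A x‖ := by
    intro x
    rcases eq_or_ne x 0 with rfl | hx
    · simp
    have hxn : 0 < ‖x‖ := norm_pos_iff.mpr hx
    have h1 : c * ‖x‖ ^ 2 ≤ (inner ℝ x (toEuclideanCLM (𝕜 := ℝ) A x) : ℝ) := by
      have h2 : (inner ℝ x (toEuclideanCLM (𝕜 := ℝ) A x) : ℝ)
          = (WithLp.ofLp x) ⬝ᵥ (A.mulVec (WithLp.ofLp x)) := by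
        rw [EuclideanSpace.inner_eq_star_dotProduct]
        simp [ofLp_toEuclideanCLM, toLin'_apply, dotProduct_comm]
      have h3 := hM.dotProduct_mulVec_nonneg (WithLp.ofLp x)
      have h4 : (inner ℝ x x : ℝ) = (WithLp.ofLp x) ⬝ᵥ (WithLp.ofLp x) := by
        rw [EuclideanSpace.inner_eq_star_dotProduct]; simp
      rw [h2, hA, add_mulVec, dotProduct_add, smul_mulVec, one_mulVec, dotProduct_smul, smul_eq_mul]
      rw [real_inner_self_eq_norm_sq] at h4
      simp only [star_trivial] at h3
      rw [← h4]
      nlinarith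
    have h5 : (inner ℝ x (toEuclideanCLM (𝕜 := ℝ) A x) : ℝ) ≤ ‖x‖ * ‖toEuclideanCLM (𝕜 := ℝ) A x‖ :=
      real_inner_le_norm _ _
    nlinarith
  rw [show ‖A⁻¹‖ = ‖toEuclideanCLM (𝕜 := ℝ) A⁻¹‖ from rfl]
  refine ContinuousLinearMap.opNorm_le_bound _ (by positivity) fun y => ?_
  set x := toEuclideanCLM (𝕜 := ℝ) A⁻¹ y with hxdef
  have h6 : toEuclideanCLM (𝕜 := ℝ) A x = y := by
    calc toEuclideanCLM (𝕜 := ℝ) A x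
        = (toEuclideanCLM (𝕜 := ℝ) A * toEuclideanCLM (𝕜 := ℝ) A⁻¹) y := rfl
      _ = toEuclideanCLM (𝕜 := ℝ) (A * A⁻¹) y := by rw [_root_.map_mul]
      _ = y := by rw [hinv, _root_.map_one]; rfl
  have := key x
  rw [h6] at this
  rw [div_mul_eq_mul_div, le_div_iff₀ hc]
  linarith

/-- Resolvent comparison between the full regularized kernel and the principal regularized
kernel: `‖((1/n)RᵀR + βI)⁻¹ − ((1/n)RᵀΠR + (γ+β)I)⁻¹‖ ≤ ‖(1/n)Rᵀ(I−Π)R − γI‖ / (β(γ+β))`. -/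
theorem stmt13 (d n : ℕ) (R : Matrix (Fin d) (Fin n) ℝ)
    (P : Matrix (Fin d) (Fin d) ℝ) (hPsymm : P.IsSymm) (hPidem : P * P = P)
    (β γ : ℝ) (hβ : 0 < β) (hγ : 0 ≤ γ) :
    IsUnit ((1 / (n : ℝ)) • (Rᵀ * R) + β • (1 : Matrix (Fin n) (Fin n) ℝ)) ∧
    IsUnit ((1 / (n : ℝ)) • (Rᵀ * P * R) + (γ + β) • (1 : Matrix (Fin n) (Fin n) ℝ)) ∧
    ‖((1 / (n : ℝ)) • (Rᵀ * R) + β • (1 : Matrix (Fin n) (Fin n) ℝ))⁻¹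
        - ((1 / (n : ℝ)) • (Rᵀ * P * R) + (γ + β) • (1 : Matrix (Fin n) (Fin n) ℝ))⁻¹‖
      ≤ ‖(1 / (n : ℝ)) • (Rᵀ * ((1 : Matrix (Fin d) (Fin d) ℝ) - P) * R)
          - γ • (1 : Matrix (Fin n) (Fin n) ℝ)‖ / (β * (γ + β)) := by
  have hγβ : 0 < γ + β := by linarith
  have hn : (0:ℝ) ≤ 1 / (n:ℝ) := by positivity
  have hRR : ((1 / (n : ℝ)) • (Rᵀ * R)).PosSemidef := by
    have h := Matrix.posSemidef_conjTranspose_mul_self R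
    rw [conjTranspose_eq_transpose_of_trivial] at h
    exact psd_smul h hn
  have hPR : ((1 / (n : ℝ)) • (Rᵀ * P * R)).PosSemidef := by
    have h := Matrix.posSemidef_conjTranspose_mul_self (P * R)
    have hform : (P * R)ᴴ * (P * R) = Rᵀ * P * R := by
      rw [conjTranspose_eq_transpose_of_trivial, transpose_mul, hPsymm.eq,
        Matrix.mul_assoc, ← Matrix.mul_assoc P P R, hPidem, ← Matrix.mul_assoc]
    rw [hform] at h
    exact psd_smul h hn
  set A := (1 / (n : ℝ)) • (Rᵀ * R) + β • (1 : Matrix (Fin n) (Fin n) ℝ) with hAdef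
  set B := (1 / (n : ℝ)) • (Rᵀ * P * R) + (γ + β) • (1 : Matrix (Fin n) (Fin n) ℝ) with hBdef
  have hAu : IsUnit A := (key_unit hRR hβ).isUnit
  have hBu : IsUnit B := (key_unit hPR hγβ).isUnit
  refine ⟨hAu, hBu, ?_⟩
  have hAdet := (isUnit_iff_isUnit_det A).mp hAu
  have hBdet := (isUnit_iff_isUnit_det B).mp hBu
  have hres : A⁻¹ - B⁻¹ = A⁻¹ * (B - A) * B⁻¹ := by
    rw [mul_sub, sub_mul, nonsing_inv_mul A hAdet, one_mul, mul_assoc,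
      mul_nonsing_inv B hBdet, mul_one]
  set E := (1 / (n : ℝ)) • (Rᵀ * ((1 : Matrix (Fin d) (Fin d) ℝ) - P) * R)
      - γ • (1 : Matrix (Fin n) (Fin n) ℝ) with hEdef
  have hBA : B - A = -E := by
    have hexp : Rᵀ * ((1 : Matrix (Fin d) (Fin d) ℝ) - P) * R = Rᵀ * R - Rᵀ * P * R := by
      rw [Matrix.mul_sub, Matrix.mul_one, Matrix.sub_mul]
    rw [hEdef, hexp, hAdef, hBdef]
    module
  have h1 : ‖A⁻¹‖ ≤ 1 / β := key_norm hRR hβ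
  have h2 : ‖B⁻¹‖ ≤ 1 / (γ + β) := key_norm hPR hγβ
  have h3 : ‖B - A‖ = ‖E‖ := by rw [hBA, norm_neg]
  calc ‖A⁻¹ - B⁻¹‖ = ‖A⁻¹ * (B - A) * B⁻¹‖ := by rw [hres]
    _ ≤ ‖A⁻¹ * (B - A)‖ * ‖B⁻¹‖ := l2_opNorm_mul _ _
    _ ≤ ‖A⁻¹‖ * ‖B - A‖ * ‖B⁻¹‖ :=
        mul_le_mul_of_nonneg_right (l2_opNorm_mul _ _) (norm_nonneg _)
    _ ≤ (1 / β) * ‖E‖ * (1 / (γ + β)) := by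
        rw [h3]
        gcongr
    _ = ‖E‖ / (β * (γ + β)) := by field_simp
end
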